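/- (Solvability of the Lyapunov equation for Hurwitz matrices.) Let M ∈ ℝ^{r×r} be Hurwitz. Then for every s > 0 there exists a symmetric positive definite matrix S ∈ ℝ^{r×r} such that S M + Mᵀ S = −s I_r. -/

import Mathlib

open Matrix Filter Topology Set

/-- A real square matrix is Hurwitz if every eigenvalue of it, viewed as a matrix over `ℂ`
(equivalently, every complex root of its characteristic polynomial), has negative real part. -/
def IsHurwitz {m : Type*} [Fintype m] [DecidableEq m] (M : Matrix m m ℝ) : Prop :=
  ∀ z : ℂ, ((M.map Complex.ofReal).charpoly).IsRoot z → z.re < 0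

open Polynomial

attribute [local instance] Matrix.normedAddCommGroup Matrix.normedSpace

section General

variable {n : Type*} [Fintype n] [DecidableEq n]

lemma my_charpoly_eval {R : Type*} [CommRing R] (A : Matrix n n R) (z : R) :
    (A.charpoly).eval z = (z • (1 : Matrix n n R) - A).det := by
  rw [Matrix.charpoly, ← Polynomial.coe_evalRingHom, RingHom.map_det]
  congr 1
  ext i j
  by_cases h : i = j <;>
    simp [Matrix.charmatrix_apply, h, Matrix.one_apply, Matrix.diagonal_apply]

lemma my_mem_spectrum_iff {K : Type*} [Field K] (A : Matrix n n K) (z : K) :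
    z ∈ spectrum K A ↔ A.charpoly.IsRoot z := by
  rw [spectrum.mem_iff, Matrix.isUnit_iff_isUnit_det, isUnit_iff_ne_zero, not_ne_iff,
    Polynomial.IsRoot, my_charpoly_eval, Algebra.algebraMap_eq_smul_one]

lemma lyap_inj_complex [Nonempty n] (A : Matrix n n ℂ)
    (hA : ∀ z : ℂ, A.charpoly.IsRoot z → z.re < 0)
    (X : Matrix n n ℂ) (h : X * A + Aᵀ * X = 0) : X = 0 := by
  have hbase : X * A = (-Aᵀ) * X := by
    rw [neg_mul, eq_neg_iff_add_eq_zero]; exact h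
  have hpow : ∀ k : ℕ, X * A ^ k = (-Aᵀ) ^ k * X := by
    intro k
    induction k with
    | zero => simp
    | succ k ih =>
      rw [pow_succ, pow_succ, ← mul_assoc, ih, mul_assoc, hbase, mul_assoc]
  have key : ∀ p : ℂ[X], X * (Polynomial.aeval A p) = (Polynomial.aeval (-Aᵀ) p) * X := by
    intro p
    induction p using Polynomial.induction_on' with
    | add p q hp hq => simp only [map_add, mul_add, add_mul, hp, hq]
    | monomial k c =>
      simp only [Polynomial.aeval_monomial, Algebra.algebraMap_eq_smul_one]
      rw [smul_one_mul, smul_one_mul, mul_smul_comm, hpow, smul_mul_assoc]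
  have hCH := key A.charpoly
  rw [Matrix.aeval_self_charpoly, mul_zero] at hCH
  have hunit : IsUnit (Polynomial.aeval (-Aᵀ) A.charpoly) := by
    by_contra hnu
    have h0 : (0 : ℂ) ∈ spectrum ℂ (Polynomial.aeval (-Aᵀ) A.charpoly) :=
      (spectrum.zero_mem_iff (R := ℂ)).mpr hnu
    have hne : (spectrum ℂ (-Aᵀ)).Nonempty :=
      spectrum.nonempty_of_isAlgClosed_of_finiteDimensional ℂ (-Aᵀ)
    rw [spectrum.map_polynomial_aeval_of_nonempty (-Aᵀ) A.charpoly hne] at h0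
    obtain ⟨μ, hμmem, hμ⟩ := h0
    have hroot : (-Aᵀ).charpoly.IsRoot μ := (my_mem_spectrum_iff _ _).mp hμmem
    have h1 : (-Aᵀ).charpoly.eval μ = (μ • (1 : Matrix n n ℂ) + A).det := by
      rw [my_charpoly_eval, sub_neg_eq_add,
        show μ • (1 : Matrix n n ℂ) + Aᵀ = (μ • (1 : Matrix n n ℂ) + A)ᵀ by
          rw [Matrix.transpose_add, Matrix.transpose_smul, Matrix.transpose_one],
        Matrix.det_transpose]
    have h2 : A.charpoly.eval (-μ) = (-1 : ℂ) ^ Fintype.card n *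
        (μ • (1 : Matrix n n ℂ) + A).det := by
      rw [my_charpoly_eval,
        show (-μ) • (1 : Matrix n n ℂ) - A = -(μ • (1 : Matrix n n ℂ) + A) by module,
        Matrix.det_neg]
    have hroot' : A.charpoly.IsRoot (-μ) := by
      have := hroot
      rw [Polynomial.IsRoot, h1] at this
      rw [Polynomial.IsRoot, h2, this, mul_zero]
    have hlt1 : (-μ).re < 0 := hA _ hroot'
    have hlt2 : μ.re < 0 := hA _ (by simpa using hμ)
    simp only [Complex.neg_re] at hlt1
    linarith
  exact hunit.mul_left_cancel (show _ * X = _ * 0 by rw [mul_zero]; exact hCH.symm)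

/-- The Lyapunov linear operator `X ↦ X A + Aᵀ X`. -/
def lyapLM (A : Matrix n n ℝ) : Matrix n n ℝ →ₗ[ℝ] Matrix n n ℝ where
  toFun X := X * A + Aᵀ * X
  map_add' X Y := by noncomm_ring
  map_smul' c X := by simp [smul_add, Matrix.smul_mul, Matrix.mul_smul]

lemma lyapLM_apply (A X : Matrix n n ℝ) : lyapLM A X = X * A + Aᵀ * X := rfl

lemma lyap_inj [Nonempty n] (A : Matrix n n ℝ) (hA : IsHurwitz A) :
    Function.Injective (lyapLM A) := by
  intro X Y hXY
  have h0 : lyapLM A (X - Y) = 0 := by rw [map_sub, hXY, sub_self]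
  set Z := X - Y with hZ
  have hc : (Z.map (Complex.ofRealHom : ℝ →+* ℂ)) * (A.map (Complex.ofRealHom : ℝ →+* ℂ))
      + (A.map (Complex.ofRealHom : ℝ →+* ℂ))ᵀ * (Z.map (Complex.ofRealHom : ℝ →+* ℂ)) = 0 := by
    have h0' := congrArg (Complex.ofRealHom.mapMatrix : Matrix n n ℝ →+* Matrix n n ℂ) h0
    simp only [lyapLM_apply, map_add, Matrix.map_mul, map_zero, RingHom.mapMatrix_apply,
      Matrix.transpose_map] at h0'
    exact h0'
  have hA' : ∀ z : ℂ, ((A.map (Complex.ofRealHom : ℝ →+* ℂ)).charpoly).IsRoot z → z.re < 0 := hA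
  have hZ0 := lyap_inj_complex _ hA' _ hc
  have : Z = 0 := by
    ext i j
    have hz := congrFun (congrFun hZ0 i) j
    simpa [Matrix.map_apply] using hz
  exact sub_eq_zero.mp this

lemma lyap_bij [Nonempty n] (A : Matrix n n ℝ) (hA : IsHurwitz A) :
    Function.Bijective (lyapLM A) :=
  ⟨lyap_inj A hA, (LinearMap.injective_iff_surjective).mp (lyap_inj A hA)⟩

/-- The homotopy path of matrices. -/
noncomputable def MuPath (M : Matrix n n ℝ) (u : ℝ) : Matrix n n ℝ :=
  (1 - u) • M - u • (1 : Matrix n n ℝ)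

lemma MuPath_hurwitz [Nonempty n] (M : Matrix n n ℝ) (hM : IsHurwitz M) {u : ℝ}
    (hu : u ∈ Set.Icc (0:ℝ) 1) : IsHurwitz (MuPath M u) := by
  intro z hz
  have hmap : (MuPath M u).map Complex.ofReal
      = ((1 - u : ℝ) : ℂ) • (M.map Complex.ofReal) - ((u : ℝ) : ℂ) • (1 : Matrix n n ℂ) := by
    ext i j
    by_cases h : i = j
    · simp only [MuPath, Matrix.map_apply, Matrix.sub_apply, Matrix.smul_apply,
        Matrix.one_apply_eq, h, smul_eq_mul]
      push_cast; ring
    · simp only [MuPath, Matrix.map_apply, Matrix.sub_apply, Matrix.smul_apply,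
        Matrix.one_apply_ne h, smul_eq_mul]
      push_cast; ring
  rw [Polynomial.IsRoot, hmap, my_charpoly_eval] at hz
  have hz' : ((z + (u:ℂ)) • (1 : Matrix n n ℂ) - ((1 - u : ℝ) : ℂ) • (M.map Complex.ofReal)).det
      = 0 := by
    rw [← hz]; congr 1; module
  rcases eq_or_lt_of_le hu.2 with h1 | h1
  · -- u = 1
    subst h1
    have : ((z + 1) • (1 : Matrix n n ℂ)).det = 0 := by
      simpa using hz'
    rw [Matrix.det_smul, Matrix.det_one, mul_one, pow_eq_zero_iff Fintype.card_ne_zero] at this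
    have : z = -1 := by linear_combination this
    simp [this]
  · -- u < 1
    set c : ℝ := 1 - u with hc
    have hcpos : 0 < c := by simp [hc]; linarith
    have hcne : ((c:ℝ):ℂ) ≠ 0 := by exact_mod_cast hcpos.ne'
    set w : ℂ := (z + (u:ℂ)) / (c:ℂ) with hw
    have hfac : (z + (u:ℂ)) • (1 : Matrix n n ℂ) - ((c:ℝ):ℂ) • (M.map Complex.ofReal)
        = ((c:ℝ):ℂ) • (w • (1 : Matrix n n ℂ) - (M.map Complex.ofReal)) := by
      rw [smul_sub, smul_smul, hw, mul_div_cancel₀ _ hcne]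
    rw [hfac, Matrix.det_smul] at hz'
    have hdet0 : (w • (1 : Matrix n n ℂ) - (M.map Complex.ofReal)).det = 0 := by
      rcases mul_eq_zero.mp hz' with h | h
      · exact absurd h (pow_ne_zero _ hcne)
      · exact h
    have hroot : ((M.map Complex.ofReal).charpoly).IsRoot w := by
      rw [Polynomial.IsRoot, my_charpoly_eval]; exact hdet0
    have hwre : w.re < 0 := hM w hroot
    have hzw : z = ((c:ℝ):ℂ) * w - (u:ℂ) := by
      rw [hw, mul_div_cancel₀ _ hcne]; ring
    have : z.re = c * w.re - u := by
      rw [hzw]; simp [Complex.sub_re, Complex.mul_re]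
    rw [this]
    nlinarith [hu.1]

end General

section Dim

variable {r : ℕ}

lemma quad_bound (C : Matrix (Fin r) (Fin r) ℝ) (x : Fin r → ℝ) (hx : ‖x‖ ≤ 1) :
    |x ⬝ᵥ C *ᵥ x| ≤ (r^2 : ℝ) * ‖C‖ := by
  have hexp : x ⬝ᵥ C *ᵥ x = ∑ i, ∑ j, x i * (C i j * x j) := by
    simp [dotProduct, Matrix.mulVec, Finset.mul_sum]
  rw [hexp]
  calc |∑ i, ∑ j, x i * (C i j * x j)|
      ≤ ∑ i, |∑ j, x i * (C i j * x j)| := Finset.abs_sum_le_sum_abs _ _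
    _ ≤ ∑ i, ∑ j, |x i * (C i j * x j)| :=
        Finset.sum_le_sum fun i _ => Finset.abs_sum_le_sum_abs _ _
    _ ≤ ∑ _i : Fin r, ∑ _j : Fin r, ‖C‖ := by
        refine Finset.sum_le_sum fun i _ => Finset.sum_le_sum fun j _ => ?_
        rw [abs_mul, abs_mul]
        have h1 : |x i| ≤ 1 := le_trans (norm_le_pi_norm x i) hx
        have h2 : |x j| ≤ 1 := le_trans (norm_le_pi_norm x j) hx
        have h3 : |C i j| ≤ ‖C‖ := C.norm_entry_le_entrywise_sup_norm
        have h0 : (0:ℝ) ≤ |C i j| := abs_nonneg _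
        calc |x i| * (|C i j| * |x j|) ≤ 1 * (‖C‖ * 1) := by
              apply mul_le_mul h1 _ (by positivity) zero_le_one
              exact mul_le_mul h3 h2 (abs_nonneg _) (norm_nonneg _)
          _ = ‖C‖ := by ring
    _ = (r^2 : ℝ) * ‖C‖ := by simp [Finset.sum_const]; ring

lemma quad_continuous (A : Matrix (Fin r) (Fin r) ℝ) :
    Continuous fun x : Fin r → ℝ => x ⬝ᵥ A *ᵥ x := by
  have : (fun x : Fin r → ℝ => x ⬝ᵥ A *ᵥ x)
      = fun x => ∑ i, x i * ∑ j, A i j * x j := by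
    funext x; simp [dotProduct, Matrix.mulVec]
  rw [this]
  exact continuous_finset_sum _ fun i _ =>
    (continuous_apply i).mul (continuous_finset_sum _ fun j _ =>
      continuous_const.mul (continuous_apply j))

lemma isOpen_quadpos (hr : 0 < r) :
    IsOpen {A : Matrix (Fin r) (Fin r) ℝ | ∀ x, x ≠ 0 → 0 < x ⬝ᵥ A *ᵥ x} := by
  refine Metric.isOpen_iff.mpr ?_
  intro A hA
  haveI : Nontrivial (Fin r → ℝ) := by
    have : Nonempty (Fin r) := ⟨⟨0, hr⟩⟩
    infer_instance
  obtain ⟨x₀, hx₀mem, hx₀min⟩ := (isCompact_sphere (0 : Fin r → ℝ) 1).exists_isMinOn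
    (NormedSpace.sphere_nonempty.mpr zero_le_one) (quad_continuous A).continuousOn
  have hx₀norm : ‖x₀‖ = 1 := by simpa using hx₀mem
  have hx₀ne : x₀ ≠ 0 := fun h => by simp [h] at hx₀norm
  set c : ℝ := x₀ ⬝ᵥ A *ᵥ x₀ with hc
  have hcpos : 0 < c := hA x₀ hx₀ne
  refine ⟨c / (r^2 + 1), by positivity, fun B hB => ?_⟩
  intro x hx
  -- first for unit vectors
  have hunit : ∀ y : Fin r → ℝ, ‖y‖ = 1 → 0 < y ⬝ᵥ B *ᵥ y := by
    intro y hy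
    have hyA : c ≤ y ⬝ᵥ A *ᵥ y := hx₀min (by simpa using hy)
    have hbd : |y ⬝ᵥ (B - A) *ᵥ y| ≤ (r^2 : ℝ) * ‖B - A‖ :=
      quad_bound (B - A) y hy.le
    have hdist : ‖B - A‖ < c / (r^2 + 1) := by
      rw [← dist_eq_norm]; exact Metric.mem_ball.mp hB
    have hsplit : y ⬝ᵥ B *ᵥ y = y ⬝ᵥ A *ᵥ y + y ⬝ᵥ (B - A) *ᵥ y := by
      rw [Matrix.sub_mulVec, dotProduct_sub]; ring
    have habs := abs_le.mp hbd
    have hr2 : (0:ℝ) ≤ (r^2 : ℝ) := by positivity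
    have : (r^2 : ℝ) * ‖B - A‖ ≤ (r^2 : ℝ) * (c / (r^2 + 1)) :=
      mul_le_mul_of_nonneg_left hdist.le hr2
    have hlt : (r^2 : ℝ) * (c / (r^2 + 1)) < c := by
      rw [div_eq_inv_mul, ← mul_assoc]
      have h1 : (r^2 : ℝ) * ((r:ℝ)^2 + 1)⁻¹ < 1 := by
        rw [mul_inv_lt_iff₀ (by positivity)]; push_cast; linarith
      nlinarith
    linarith [habs.1]
  have hxnorm : ‖x‖ ≠ 0 := norm_ne_zero_iff.mpr hx
  set y := ‖x‖⁻¹ • x with hy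
  have hynorm : ‖y‖ = 1 := by
    rw [hy, norm_smul, norm_inv, norm_norm, inv_mul_cancel₀ hxnorm]
  have hxy : x = ‖x‖ • y := by
    rw [hy, smul_smul, mul_inv_cancel₀ hxnorm, one_smul]
  have hpos := hunit y hynorm
  have hrw : x ⬝ᵥ B *ᵥ x = ‖x‖ * (‖x‖ * (y ⬝ᵥ B *ᵥ y)) := by
    conv_lhs => rw [hxy]
    rw [smul_dotProduct, Matrix.mulVec_smul, dotProduct_smul,
      smul_eq_mul, smul_eq_mul]
  rw [hrw]
  have h0 : 0 < ‖x‖ := lt_of_le_of_ne (norm_nonneg _) (Ne.symm hxnorm)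
  exact mul_pos h0 (mul_pos h0 hpos)

lemma isClosed_quadnonneg :
    IsClosed {A : Matrix (Fin r) (Fin r) ℝ | ∀ x, 0 ≤ x ⬝ᵥ A *ᵥ x} := by
  have heq : {A : Matrix (Fin r) (Fin r) ℝ | ∀ x, 0 ≤ x ⬝ᵥ A *ᵥ x}
      = ⋂ x : Fin r → ℝ, {A | 0 ≤ x ⬝ᵥ A *ᵥ x} := by ext; simp [Set.mem_iInter]
  rw [heq]
  refine isClosed_iInter fun x => isClosed_le continuous_const ?_
  have : (fun A : Matrix (Fin r) (Fin r) ℝ => x ⬝ᵥ A *ᵥ x)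
      = fun A => ∑ i, x i * ∑ j, A i j * x j := by
    funext A; simp [dotProduct, Matrix.mulVec]
  rw [this]
  exact continuous_finset_sum _ fun i _ =>
    continuous_const.mul (continuous_finset_sum _ fun j _ =>
      (continuous_id.matrix_elem i j).mul continuous_const)

noncomputable def lyapCLM (A : Matrix (Fin r) (Fin r) ℝ) :
    Matrix (Fin r) (Fin r) ℝ →L[ℝ] Matrix (Fin r) (Fin r) ℝ :=
  LinearMap.toContinuousLinearMap (lyapLM A)

lemma lyapCLM_apply (A X : Matrix (Fin r) (Fin r) ℝ) :
    lyapCLM A X = X * A + Aᵀ * X := rfl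

lemma lyapCLM_affine (M : Matrix (Fin r) (Fin r) ℝ) (u : ℝ) :
    lyapCLM (MuPath M u) = lyapCLM M
      + u • (-(lyapCLM M) - (2:ℝ) • (1 : Matrix (Fin r) (Fin r) ℝ →L[ℝ] Matrix (Fin r) (Fin r) ℝ)) := by
  refine ContinuousLinearMap.ext fun X => ?_
  have rhs : (lyapCLM M + u • (-(lyapCLM M)
      - (2:ℝ) • (1 : Matrix (Fin r) (Fin r) ℝ →L[ℝ] Matrix (Fin r) (Fin r) ℝ))) X
      = (X * M + Mᵀ * X) + u • (-(X * M + Mᵀ * X) - (2:ℝ) • X) := by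
    simp only [ContinuousLinearMap.add_apply, ContinuousLinearMap.coe_smul',
      Pi.smul_apply, ContinuousLinearMap.sub_apply, ContinuousLinearMap.neg_apply,
      ContinuousLinearMap.one_apply, lyapCLM_apply]
  rw [rhs, lyapCLM_apply, MuPath]
  simp only [Matrix.transpose_sub, Matrix.transpose_smul, Matrix.transpose_one,
    Matrix.mul_sub, Matrix.sub_mul, Matrix.mul_smul, Matrix.smul_mul,
    Matrix.mul_one, Matrix.one_mul]
  module

lemma lyap_isUnit (A : Matrix (Fin r) (Fin r) ℝ) (h : Function.Bijective (lyapLM A)) :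
    IsUnit (lyapCLM A) :=
  ⟨((LinearEquiv.ofBijective (lyapLM A) h).toContinuousLinearEquiv).toUnit, by ext X; rfl⟩

end Dim

/-- Solvability of the Lyapunov equation `SM + MᵀS = −sI` for Hurwitz matrices. -/
theorem stmt_7 {r : ℕ} (hr : 0 < r) (M : Matrix (Fin r) (Fin r) ℝ) (hM : IsHurwitz M) :
    ∀ s : ℝ, 0 < s → ∃ S : Matrix (Fin r) (Fin r) ℝ, S.IsSymm ∧ S.PosDef ∧
      S * M + Mᵀ * S = -(s • (1 : Matrix (Fin r) (Fin r) ℝ)) := by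
  intro s hs
  haveI : Nonempty (Fin r) := ⟨⟨0, hr⟩⟩
  set v : Matrix (Fin r) (Fin r) ℝ := -(s • 1) with hv
  set L : ℝ → _ := fun u => lyapCLM (r := r) (MuPath M u) with hL
  have hbij : ∀ u ∈ Icc (0:ℝ) 1, Function.Bijective (lyapLM (MuPath M u)) :=
    fun u hu => lyap_bij _ (MuPath_hurwitz M hM hu)
  have hunit : ∀ u ∈ Icc (0:ℝ) 1, IsUnit (L u) := fun u hu => lyap_isUnit _ (hbij u hu)
  set S : ℝ → Matrix (Fin r) (Fin r) ℝ := fun u => Ring.inverse (L u) v with hS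
  have hsol : ∀ u ∈ Icc (0:ℝ) 1, lyapLM (MuPath M u) (S u) = v := by
    intro u hu
    have h1 : (L u * Ring.inverse (L u)) v = v := by
      rw [Ring.mul_inverse_cancel _ (hunit u hu)]
      rfl
    exact h1
  have hsymm : ∀ u ∈ Icc (0:ℝ) 1, (S u).IsSymm := by
    intro u hu
    have h2 : lyapLM (MuPath M u) (S u)ᵀ = v := by
      have h3 := congrArg Matrix.transpose (hsol u hu)
      simp only [lyapLM_apply, Matrix.transpose_add, Matrix.transpose_mul,
        Matrix.transpose_transpose, hv, Matrix.transpose_neg, Matrix.transpose_smul,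
        Matrix.transpose_one] at h3
      rw [lyapLM_apply, add_comm]
      exact h3
    exact (hbij u hu).1 (h2.trans (hsol u hu).symm)
  have hherm : ∀ u ∈ Icc (0:ℝ) 1, (S u).IsHermitian := by
    intro u hu
    rw [Matrix.IsHermitian, Matrix.conjTranspose_eq_transpose_of_trivial]
    exact hsymm u hu
  have hinj : ∀ u ∈ Icc (0:ℝ) 1, ∀ x : Fin r → ℝ, (S u) *ᵥ x = 0 → x = 0 := by
    intro u hu x hx
    have hq := congrArg (fun W => x ⬝ᵥ W *ᵥ x) (hsol u hu)
    simp only [lyapLM_apply] at hq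
    have hvm : x ᵥ* (S u) = 0 := by
      rw [show x ᵥ* (S u) = (S u)ᵀ *ᵥ x from (Matrix.mulVec_transpose _ _).symm,
        (hsymm u hu), hx]
    have hleft : x ⬝ᵥ ((S u) * (MuPath M u) + (MuPath M u)ᵀ * (S u)) *ᵥ x = 0 := by
      rw [Matrix.add_mulVec, dotProduct_add, ← Matrix.mulVec_mulVec,
        ← Matrix.mulVec_mulVec, Matrix.dotProduct_mulVec, hvm, zero_dotProduct,
        hx, Matrix.mulVec_zero, dotProduct_zero, add_zero]
    rw [hleft] at hq
    have hrhs : x ⬝ᵥ v *ᵥ x = -(s * (x ⬝ᵥ x)) := by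
      rw [hv, Matrix.neg_mulVec, dotProduct_neg, Matrix.smul_mulVec,
        Matrix.one_mulVec, dotProduct_smul, smul_eq_mul]
    rw [hrhs] at hq
    have hsx : s * (x ⬝ᵥ x) = 0 := by linarith
    exact dotProduct_self_eq_zero.mp ((mul_eq_zero.mp hsx).resolve_left hs.ne')
  have hLcont : Continuous L := by
    have : L = fun u => lyapCLM M + u • (-(lyapCLM M)
        - (2:ℝ) • (1 : Matrix (Fin r) (Fin r) ℝ →L[ℝ] Matrix (Fin r) (Fin r) ℝ)) :=
      funext fun u => lyapCLM_affine M u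
    rw [this]
    exact continuous_const.add (continuous_id.smul continuous_const)
  have hScont : ContinuousOn S (Icc 0 1) := by
    refine ContinuousOn.clm_apply ?_ continuousOn_const
    intro u hu
    have h1 : ContinuousAt Ring.inverse (L u) := by
      have := @NormedRing.inverse_continuousAt _ ContinuousLinearMap.toNormedRing _ (hunit u hu).unit
      rwa [IsUnit.unit_spec] at this
    exact (h1.comp hLcont.continuousAt).continuousWithinAt
  -- endpoint u = 1
  have h1mem : (1:ℝ) ∈ Icc (0:ℝ) 1 := by norm_num
  have hS1' : lyapLM (MuPath M 1) ((s/2) • 1) = v := by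
    rw [lyapLM_apply, show MuPath M 1 = -(1 : Matrix (Fin r) (Fin r) ℝ) by
      simp [MuPath], hv]
    simp only [Matrix.transpose_neg, Matrix.transpose_one, Matrix.mul_neg, Matrix.mul_one,
      Matrix.neg_mul, Matrix.one_mul]
    module
  have hS1 : S 1 = (s/2) • 1 := (hbij 1 h1mem).1 ((hsol 1 h1mem).trans hS1'.symm)
  have hS1PD : ((s/2) • (1 : Matrix (Fin r) (Fin r) ℝ)).PosDef := by
    rw [Matrix.posDef_iff_dotProduct_mulVec]
    constructor
    · rw [Matrix.IsHermitian, Matrix.conjTranspose_eq_transpose_of_trivial,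
        Matrix.transpose_smul, Matrix.transpose_one]
    · intro x hx
      have hnn : 0 ≤ x ⬝ᵥ x := by
        rw [dotProduct]
        exact Finset.sum_nonneg fun i _ => mul_self_nonneg (x i)
      have hxx : 0 < x ⬝ᵥ x :=
        lt_of_le_of_ne hnn (by
          intro h; exact hx (dotProduct_self_eq_zero.mp h.symm))
      simp only [Matrix.smul_mulVec, Matrix.one_mulVec, dotProduct_smul,
        smul_eq_mul, star_trivial]
      positivity
  -- clopen argument
  haveI : PreconnectedSpace (Icc (0:ℝ) 1) := Subtype.preconnectedSpace isPreconnected_Icc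
  set P : Set (Icc (0:ℝ) 1) := {u | (S u).PosDef} with hP
  have hSrest : Continuous fun u : Icc (0:ℝ) 1 => S u := hScont.restrict
  have hopen : IsOpen P := by
    have hPeq : P = (fun u : Icc (0:ℝ) 1 => S u) ⁻¹'
        {A | ∀ x, x ≠ 0 → 0 < x ⬝ᵥ A *ᵥ x} := by
      ext u
      constructor
      · intro hPD x hx
        simpa [star_trivial] using (Matrix.posDef_iff_dotProduct_mulVec.mp hPD).2 hx
      · intro hq
        exact Matrix.posDef_iff_dotProduct_mulVec.mpr ⟨hherm u u.2, fun x hx => by simpa [star_trivial] using hq x hx⟩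
    rw [hPeq]
    exact (isOpen_quadpos hr).preimage hSrest
  have hclosed : IsClosed P := by
    have hPeq : P = (fun u : Icc (0:ℝ) 1 => S u) ⁻¹'
        {A | ∀ x, 0 ≤ x ⬝ᵥ A *ᵥ x} := by
      ext u
      constructor
      · intro hPD x
        simpa [star_trivial] using (Matrix.posSemidef_iff_dotProduct_mulVec.mp hPD.posSemidef).2 x
      · intro hq
        have hpsd : (S u).PosSemidef := Matrix.posSemidef_iff_dotProduct_mulVec.mpr ⟨hherm u u.2, fun x => by simpa [star_trivial] using hq x⟩
        refine Matrix.posDef_iff_dotProduct_mulVec.mpr ⟨hherm u u.2, fun x hx => ?_⟩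
        rcases lt_or_eq_of_le ((Matrix.posSemidef_iff_dotProduct_mulVec.mp hpsd).2 x) with h | h
        · exact h
        · exfalso
          apply hx
          apply hinj u u.2 x
          have h0 : star x ⬝ᵥ (S u) *ᵥ x = 0 := h.symm
          exact (hpsd.dotProduct_mulVec_zero_iff x).mp h0
    rw [hPeq]
    exact isClosed_quadnonneg.preimage hSrest
  have hne : P.Nonempty := ⟨⟨1, h1mem⟩, by
    show (S 1).PosDef
    rw [hS1]; exact hS1PD⟩
  have huniv : P = univ := IsClopen.eq_univ ⟨hclosed, hopen⟩ hne
  have h0mem : (0:ℝ) ∈ Icc (0:ℝ) 1 := by norm_num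
  have hS0PD : (S 0).PosDef := by
    have : (⟨0, h0mem⟩ : Icc (0:ℝ) 1) ∈ P := by rw [huniv]; trivial
    exact this
  refine ⟨S 0, hsymm 0 h0mem, hS0PD, ?_⟩
  have := hsol 0 h0mem
  rw [show MuPath M 0 = M by simp [MuPath], lyapLM_apply] at this
  exact this
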